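/- Let s ∈ (0,1), t ∈ (0,1), R₂ = √(2s-s²), and R satisfy (2t - t²)(2s - s²) = 1 - R². For φ ∈ [0,2π), let p = (1-s, R₂(1-t)e^{iφ}) and v = ((1-t)R₂, -(1-s)e^{iφ}). Then ∥p∥ = R, ∥v∥ = R, and the complex line ℓ = {p + vζ : ζ ∈ ℂ} is complex tangent to the sphere R∂𝔹² at p, i.e. the Hermitian inner product ⟨v, p⟩ = 0. -/

import Mathlib

/-- An element of ℂ² from two coordinates. -/
noncomputable def e2 (a b : ℂ) : EuclideanSpace ℂ (Fin 2) := WithLp.toLp 2 ![a, b]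

lemma e2_norm (a b : ℂ) : ‖e2 a b‖ = Real.sqrt (‖a‖ ^ 2 + ‖b‖ ^ 2) := by
  rw [EuclideanSpace.norm_eq]
  simp [e2, Fin.sum_univ_two]

lemma e2_inner (a b c d : ℂ) :
    (inner ℂ (e2 a b) (e2 c d) : ℂ) = starRingEnd ℂ a * c + starRingEnd ℂ b * d := by
  simp [e2, PiLp.inner_apply, Fin.sum_univ_two, RCLike.inner_apply, mul_comm]

/-- The line through p = (1-s, R₂(1-t)e^{iφ}) with direction v = ((1-t)R₂, -(1-s)e^{iφ})
is complex tangent to the sphere of radius R at p: ‖p‖ = ‖v‖ = R and ⟨v,p⟩ = 0. -/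
theorem stmt_7 (s t : ℝ) (hs : s ∈ Set.Ioo (0 : ℝ) 1) (ht : t ∈ Set.Ioo (0 : ℝ) 1)
    (R : ℝ) (hR0 : 0 ≤ R) (hR : (2 * t - t ^ 2) * (2 * s - s ^ 2) = 1 - R ^ 2)
    (φ : ℝ) (hφ : φ ∈ Set.Ico 0 (2 * Real.pi)) :
    ‖e2 ((1 - s : ℝ) : ℂ)
        ((Real.sqrt (2 * s - s ^ 2) * (1 - t) : ℝ) * Complex.exp (φ * Complex.I))‖ = R ∧
    ‖e2 (((1 - t) * Real.sqrt (2 * s - s ^ 2) : ℝ) : ℂ)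
        (-((1 - s : ℝ) : ℂ) * Complex.exp (φ * Complex.I))‖ = R ∧
    (inner ℂ
        (e2 (((1 - t) * Real.sqrt (2 * s - s ^ 2) : ℝ) : ℂ)
          (-((1 - s : ℝ) : ℂ) * Complex.exp (φ * Complex.I)))
        (e2 ((1 - s : ℝ) : ℂ)
          ((Real.sqrt (2 * s - s ^ 2) * (1 - t) : ℝ) * Complex.exp (φ * Complex.I)))
      : ℂ) = 0 := by
  obtain ⟨hs0, hs1⟩ := hs
  obtain ⟨ht0, ht1⟩ := ht
  have hA : (0 : ℝ) ≤ 2 * s - s ^ 2 := by nlinarith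
  have hsq : Real.sqrt (2 * s - s ^ 2) ^ 2 = 2 * s - s ^ 2 := Real.sq_sqrt hA
  have hexp : ‖Complex.exp (φ * Complex.I)‖ = 1 := by
    simp [Complex.norm_exp_ofReal_mul_I φ]
  have key : (1 - s) ^ 2 + (2 * s - s ^ 2) * (1 - t) ^ 2 = R ^ 2 := by nlinarith
  refine ⟨?_, ?_, ?_⟩
  · rw [e2_norm]
    rw [norm_mul, hexp, Complex.norm_real, Complex.norm_real]
    rw [Real.norm_of_nonneg (by linarith : (0:ℝ) ≤ 1 - s),
      Real.norm_of_nonneg (mul_nonneg (Real.sqrt_nonneg _) (by linarith : (0:ℝ) ≤ 1 - t))]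
    rw [show ((1 - s) ^ 2 + (Real.sqrt (2 * s - s ^ 2) * (1 - t) * 1) ^ 2) = R ^ 2 by
      nlinarith]
    exact Real.sqrt_sq hR0
  · rw [e2_norm]
    rw [norm_mul, hexp, norm_neg, Complex.norm_real, Complex.norm_real]
    rw [Real.norm_of_nonneg (by linarith : (0:ℝ) ≤ 1 - s),
      Real.norm_of_nonneg (mul_nonneg (by linarith : (0:ℝ) ≤ 1 - t) (Real.sqrt_nonneg _))]
    rw [show (((1 - t) * Real.sqrt (2 * s - s ^ 2)) ^ 2 + ((1 - s) * 1) ^ 2) = R ^ 2 by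
      nlinarith]
    exact Real.sqrt_sq hR0
  · rw [e2_inner]
    have h1 : Complex.exp (-(φ * Complex.I)) * Complex.exp (φ * Complex.I) = 1 := by
      rw [← Complex.exp_add]; simp
    simp only [map_mul, map_neg, Complex.conj_ofReal, ← Complex.exp_conj, map_mul,
      Complex.conj_I, mul_neg, Complex.conj_ofReal]
    push_cast
    linear_combination (-(((Real.sqrt (2*s-s^2) : ℝ) : ℂ) * (1 - (s:ℂ)) * (1 - (t:ℂ)))) * h1
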